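/- Let X be a complex Banach space, let Ω be a nonempty bounded open connected subset of ℂ, and let T ∈ B₁(Ω). Then for every λ ∈ ℂ the range of T − λ is dense in X; equivalently, the adjoint T* has empty point spectrum, i.e., ker(T* − λ) = {0} for every λ ∈ ℂ. -/

import Mathlib

/-- The Cowen–Douglas class `B₁(Ω)`: `Ω ⊆ σ(T)`; the closed linear span of
`⋃_{λ∈Ω} ker(T − λ)` is all of `X`; `T − λ` is surjective for every `λ ∈ Ω`; and
`dim ker(T − λ) = 1` for every `λ ∈ Ω`. -/
def MemCowenDouglasOne {X : Type*} [NormedAddCommGroup X] [NormedSpace ℂ X]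
    (Ω : Set ℂ) (T : X →L[ℂ] X) : Prop :=
  Ω ⊆ spectrum ℂ T ∧
  (Submodule.span ℂ
      (⋃ μ ∈ Ω, ((LinearMap.ker ((T - μ • (1 : X →L[ℂ] X) : X →L[ℂ] X) : X →ₗ[ℂ] X) : Submodule ℂ X) : Set X))
    ).topologicalClosure = ⊤ ∧
  (∀ μ ∈ Ω, Function.Surjective (T - μ • (1 : X →L[ℂ] X))) ∧
  (∀ μ ∈ Ω, Module.finrank ℂ (LinearMap.ker ((T - μ • (1 : X →L[ℂ] X) : X →L[ℂ] X) : X →ₗ[ℂ] X)) = 1)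

/-- A submodule of a complex normed space is dense provided every continuous linear
functional vanishing on it is zero (converse of the easy direction), via Hahn–Banach
on the quotient by its closure. -/
lemma dense_of_forall_dual_eq_zero {X : Type*} [NormedAddCommGroup X] [NormedSpace ℂ X]
    (M : Submodule ℂ X) (h : ∀ φ : X →L[ℂ] ℂ, (∀ x ∈ M, φ x = 0) → φ = 0) :
    Dense (M : Set X) := by
  rw [Submodule.dense_iff_topologicalClosure_eq_top]
  set N := M.topologicalClosure with hN
  by_contra hne
  have hclosed : IsClosed (N : Set X) := M.isClosed_topologicalClosure
  obtain ⟨x, hx⟩ : ∃ x : X, x ∉ N := by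
    by_contra hx
    push_neg at hx
    exact hne (Submodule.eq_top_iff'.2 hx)
  have hx0 : (N.mkQ x : X ⧸ N) ≠ 0 := by
    simpa [Submodule.Quotient.mk_eq_zero] using hx
  obtain ⟨g, hg1, hgx⟩ := exists_dual_vector ℂ _ (norm_ne_zero_iff.2 hx0)
  set φ : X →L[ℂ] ℂ :=
    { toLinearMap := g.toLinearMap.comp N.mkQ
      cont := g.continuous.comp continuous_quot_mk }
  have hφ0 : φ = 0 := by
    refine h φ fun y hy => ?_
    have : N.mkQ y = 0 := by
      simpa [Submodule.Quotient.mk_eq_zero] using M.le_topologicalClosure hy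
    simp [φ, this]
  have : φ x = (‖N.mkQ x‖ : ℂ) := by simpa [φ] using hgx
  rw [hφ0] at this
  simp only [ContinuousLinearMap.zero_apply] at this
  exact hx0 (by simpa [norm_eq_zero] using (Complex.ofReal_eq_zero.1 this.symm))

/-- If `Ω` is a nonempty bounded open connected subset of `ℂ` and
`T ∈ B₁(Ω)`, then for every `λ ∈ ℂ` the range of `T − λ` is dense in `X`;
equivalently, the adjoint `T*` has empty point spectrum: every continuous linear
functional `φ` with `φ ∘ T = λ • φ` vanishes. -/
theorem range_dense_and_adjoint_no_eigenvalue_of_cowenDouglas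
    (X : Type*) [NormedAddCommGroup X] [NormedSpace ℂ X] [CompleteSpace X]
    (Ω : Set ℂ) (hne : Ω.Nonempty) (hbd : Bornology.IsBounded Ω) (hop : IsOpen Ω)
    (hconn : IsConnected Ω)
    (T : X →L[ℂ] X) (hT : MemCowenDouglasOne Ω T) :
    (∀ lam : ℂ,
        Dense ((LinearMap.range ((T - lam • (1 : X →L[ℂ] X) : X →L[ℂ] X) : X →ₗ[ℂ] X) : Submodule ℂ X) : Set X)) ∧
    (∀ lam : ℂ, ∀ φ : X →L[ℂ] ℂ, (∀ x : X, φ (T x) = lam * φ x) → φ = 0) := by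
  obtain ⟨-, hspan, hsurj, -⟩ := hT
  have key : ∀ lam : ℂ, ∀ φ : X →L[ℂ] ℂ, (∀ x : X, φ (T x) = lam * φ x) → φ = 0 := by
    intro lam φ hφ
    by_cases hmem : lam ∈ Ω
    · -- `T - lam` is surjective, and `φ` kills its range, hence `φ = 0`.
      ext y
      obtain ⟨x, hx⟩ := hsurj lam hmem y
      have : φ y = φ (T x) - lam * φ x := by
        rw [← hx]; simp [mul_comm]
      rw [this, hφ x, sub_self, ContinuousLinearMap.zero_apply]
    · -- `φ` vanishes on each `ker (T - μ)`, `μ ∈ Ω`, whose span is dense.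
      have hker : Submodule.span ℂ
          (⋃ μ ∈ Ω, ((LinearMap.ker ((T - μ • (1 : X →L[ℂ] X) : X →L[ℂ] X) : X →ₗ[ℂ] X) : Submodule ℂ X) : Set X))
          ≤ LinearMap.ker (φ : X →ₗ[ℂ] ℂ) := by
        rw [Submodule.span_le]
        intro x hx
        simp only [Set.mem_iUnion] at hx
        obtain ⟨μ, hμ, hxk⟩ := hx
        have hTx : T x = μ • x := by
          have h2 : T x - μ • x = 0 := by
            simpa using LinearMap.mem_ker.1 hxk
          linear_combination (norm := module) h2
        have hφx : μ * φ x = lam * φ x := by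
          have := hφ x
          rwa [hTx, map_smul, smul_eq_mul] at this
        have : (μ - lam) * φ x = 0 := by ring_nf; linear_combination hφx
        rcases mul_eq_zero.1 this with h | h
        · exact absurd (by linear_combination h : μ = lam) (fun he => hmem (he ▸ hμ))
        · exact LinearMap.mem_ker.2 h
      have hclosed : IsClosed ((LinearMap.ker (φ : X →ₗ[ℂ] ℂ) : Submodule ℂ X) : Set X) := by
        have : (LinearMap.ker (φ : X →ₗ[ℂ] ℂ) : Set X) = φ ⁻¹' {0} := rfl
        rw [this]
        exact isClosed_singleton.preimage φ.continuous
      have htop : (⊤ : Submodule ℂ X) ≤ LinearMap.ker (φ : X →ₗ[ℂ] ℂ) := by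
        rw [← hspan]
        exact (Submodule.topologicalClosure_minimal _ hker hclosed)
      ext x
      simpa using LinearMap.mem_ker.1 (htop (Submodule.mem_top (x := x)))
  refine ⟨fun lam => ?_, key⟩
  apply dense_of_forall_dual_eq_zero
  intro φ hφ
  refine key lam φ fun x => ?_
  have : φ ((T - lam • (1 : X →L[ℂ] X)) x) = 0 :=
    hφ _ (LinearMap.mem_range.2 ⟨x, rfl⟩)
  simp only [ContinuousLinearMap.sub_apply, ContinuousLinearMap.smul_apply,
    ContinuousLinearMap.one_apply, map_sub, map_smul, smul_eq_mul, sub_eq_zero] at this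
  exact this
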